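/- Let D be a triangulated category, C a thick subcategory of D, and Q : D → D/C the Verdier quotient. For a stable t-structure (U, V) in D, the pair (Q(U), Q(V)) is a stable t-structure in D/C if and only if (U ∩ C, V ∩ C) is a stable t-structure in C. -/

import Mathlib

open CategoryTheory Limits Pretriangulated

universe v₁ v₂ u₁ u₂

namespace PaperIKM

variable (C : Type u₁) [Category.{v₁} C] [HasZeroObject C] [HasShift C ℤ] [Preadditive C]
  [∀ n : ℤ, (shiftFunctor C n).Additive] [Pretriangulated C]

/-- A stable t-structure in a pretriangulated category. -/
structure IsStableTStructure (U V : Set C) : Prop where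
  shift_memU : ∀ (n : ℤ) (X : C), X ∈ U → (shiftFunctor C n).obj X ∈ U
  shift_memV : ∀ (n : ℤ) (X : C), X ∈ V → (shiftFunctor C n).obj X ∈ V
  hom_zero : ∀ ⦃X Y : C⦄, X ∈ U → Y ∈ V → ∀ f : X ⟶ Y, f = 0
  exists_triangle : ∀ X : C, ∃ (A B : C) (_ : A ∈ U) (_ : B ∈ V)
    (f : A ⟶ X) (g : X ⟶ B) (h : B ⟶ A⟦(1 : ℤ)⟧),
      Triangle.mk f g h ∈ distTriang C

/-- A relative version: `(U, V)` is a stable t-structure "in" the triangulated subcategory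
whose objects form the set `W` (all subcategories being subcategories of the ambient
category `C`). -/
structure IsStableTStructureRel (W U V : Set C) : Prop where
  subU : U ⊆ W
  subV : V ⊆ W
  shift_memU : ∀ (n : ℤ) (X : C), X ∈ U → (shiftFunctor C n).obj X ∈ U
  shift_memV : ∀ (n : ℤ) (X : C), X ∈ V → (shiftFunctor C n).obj X ∈ V
  hom_zero : ∀ ⦃X Y : C⦄, X ∈ U → Y ∈ V → ∀ f : X ⟶ Y, f = 0
  exists_triangle : ∀ X ∈ W, ∃ (A B : C) (_ : A ∈ U) (_ : B ∈ V)
    (f : A ⟶ X) (g : X ⟶ B) (h : B ⟶ A⟦(1 : ℤ)⟧),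
      Triangle.mk f g h ∈ distTriang C

/-- A thick subcategory: full triangulated subcategory closed under direct summands. -/
structure IsThickSub (U : Set C) : Prop where
  zero_mem : ∀ X : C, IsZero X → X ∈ U
  iso_mem : ∀ ⦃X Y : C⦄, (X ≅ Y) → X ∈ U → Y ∈ U
  shift_mem : ∀ (n : ℤ) (X : C), X ∈ U → (shiftFunctor C n).obj X ∈ U
  ext_mem : ∀ T : Triangle C, (T ∈ distTriang C) → T.obj₁ ∈ U → T.obj₃ ∈ U → T.obj₂ ∈ U
  summand_mem : ∀ (X Y : C) (s : X ⟶ Y) (r : Y ⟶ X), s ≫ r = 𝟙 X → Y ∈ U → X ∈ U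

variable {C}

/-- The class of morphisms whose cone belongs to `W`; localizing at this class produces the
Verdier quotient by `W`. -/
def coneIn (W : Set C) : MorphismProperty C := fun X Y f =>
  ∃ (Z : C) (g : Y ⟶ Z) (h : Z ⟶ X⟦(1 : ℤ)⟧),
    (Triangle.mk f g h ∈ distTriang C) ∧ Z ∈ W

variable {E : Type u₂} [Category.{v₂} E] [HasZeroObject E] [HasShift E ℤ] [Preadditive E]
  [∀ n : ℤ, (shiftFunctor E n).Additive] [Pretriangulated E]

/-- The image of a subcategory under a functor, closed under isomorphism. -/
def qImage (Q : C ⥤ E) (U : Set C) : Set E :=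
  {Y | ∃ X ∈ U, Nonempty (Y ≅ Q.obj X)}

set_option linter.unusedSectionVars false

section MultClosure

/-- The multiplicative closure of a class of morphisms. -/
inductive MClos (W : MorphismProperty C) : ∀ ⦃X Y : C⦄, (X ⟶ Y) → Prop
  | of ⦃X Y : C⦄ (f : X ⟶ Y) (hf : W f) : MClos W f
  | id (X : C) : MClos W (𝟙 X)
  | comp ⦃X Y Z : C⦄ (f : X ⟶ Y) (g : Y ⟶ Z) (hf : MClos W f) (hg : MClos W g) :
      MClos W (f ≫ g)

/-- The multiplicative closure, as a `MorphismProperty`. -/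
def mclosP (W : MorphismProperty C) : MorphismProperty C := fun _ _ f => MClos W f

/-- Chains of morphisms in `W`, with an explicit length. -/
inductive ChainW (W : MorphismProperty C) : ℕ → ∀ ⦃X Y : C⦄, (X ⟶ Y) → Prop
  | nil (X : C) : ChainW W 0 (𝟙 X)
  | cons ⦃X Y Z : C⦄ {n : ℕ} (f : X ⟶ Y) (s : Y ⟶ Z) (hf : ChainW W n f) (hs : W s) :
      ChainW W (n + 1) (f ≫ s)

lemma ChainW.mclos {W : MorphismProperty C} :
    ∀ {n : ℕ} ⦃X Y : C⦄ {f : X ⟶ Y}, ChainW W n f → MClos W f := by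
  intro n X Y f h
  induction h with
  | nil X => exact MClos.id X
  | cons f s hf hs ih => exact MClos.comp f s ih (MClos.of s hs)

lemma ChainW.append {W : MorphismProperty C} :
    ∀ ⦃Y Z : C⦄ {n : ℕ} {g : Y ⟶ Z}, ChainW W n g →
      ∀ ⦃X : C⦄ {m : ℕ} {f : X ⟶ Y}, ChainW W m f → ∃ k, ChainW W k (f ≫ g) := by
  intro Y Z n g hg
  induction hg with
  | nil W => intro X m f hf; exact ⟨m, by simpa using hf⟩
  | cons g s hg hs ih =>
      intro X m f hf
      obtain ⟨k, hk⟩ := ih hf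
      exact ⟨k + 1, by simpa only [Category.assoc] using ChainW.cons _ s hk hs⟩

lemma MClos.exists_chainW {W : MorphismProperty C} ⦃X Y : C⦄ {f : X ⟶ Y}
    (hf : MClos W f) : ∃ n, ChainW W n f := by
  induction hf with
  | of f hf => exact ⟨1, by simpa using ChainW.cons (𝟙 _) f (ChainW.nil _) hf⟩
  | id X => exact ⟨0, ChainW.nil X⟩
  | comp f g hf hg ihf ihg =>
      obtain ⟨m, hm⟩ := ihf
      obtain ⟨n, hn⟩ := ihg
      exact hn.append hm

end MultClosure

section ConeIn

variable {Cs : Set C}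

lemma mclos_ore :
    ∀ ⦃X' X : C⦄ (s : X' ⟶ X), MClos (coneIn Cs) s → ∀ ⦃Y : C⦄ (f : X' ⟶ Y),
    ∃ (Y' : C) (f' : X ⟶ Y') (s' : Y ⟶ Y'), MClos (coneIn Cs) s' ∧ f ≫ s' = s ≫ f' := by
  intro X' X s hs
  induction hs with
  | of s hs =>
      intro Y f
      obtain ⟨Z, gz, hz, H, mem⟩ := hs
      obtain ⟨Y'', s', g', mem'⟩ := distinguished_cocone_triangle₂ (hz ≫ f⟦(1 : ℤ)⟧')
      obtain ⟨b, hb₁, -⟩ := complete_distinguished_triangle_morphism₂ _ _ H mem' f (𝟙 Z)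
        (by exact (Category.id_comp _).symm)
      exact ⟨Y'', b, s', MClos.of s' ⟨Z, g', hz ≫ f⟦(1 : ℤ)⟧', mem', mem⟩, hb₁.symm⟩
  | id X => intro Y f; exact ⟨Y, f, 𝟙 Y, MClos.id Y, by simp⟩
  | comp s t hs ht ihs iht =>
      intro Y f
      obtain ⟨Y₁, f₁, s₁, hs₁, e₁⟩ := ihs f
      obtain ⟨Y₂, f₂, s₂, hs₂, e₂⟩ := iht f₁
      exact ⟨Y₂, f₂, s₁ ≫ s₂, MClos.comp _ _ hs₁ hs₂, by
        rw [← Category.assoc, e₁, Category.assoc, e₂, Category.assoc]⟩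

lemma mclos_ext (hC : IsThickSub C Cs) :
    ∀ ⦃X' X : C⦄ (s : X' ⟶ X), MClos (coneIn Cs) s → ∀ ⦃Y : C⦄ (g : X ⟶ Y), s ≫ g = 0 →
    ∃ (Y' : C) (t : Y ⟶ Y'), MClos (coneIn Cs) t ∧ g ≫ t = 0 := by
  intro X' X s hs
  induction hs with
  | of s hs =>
      intro Y g hg
      obtain ⟨Z, gz, hz, H, mem⟩ := hs
      obtain ⟨q, hq⟩ := Triangle.yoneda_exact₂ _ H g hg
      obtain ⟨Y', r, t', mem'⟩ := distinguished_cocone_triangle q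
      refine ⟨Y', r, MClos.of r ⟨Z⟦(1 : ℤ)⟧, t', _, rot_of_distTriang _ mem',
        hC.shift_mem 1 Z mem⟩, ?_⟩
      have eq := comp_distTriang_mor_zero₁₂ _ mem'
      rw [hq]; exact (Category.assoc _ _ _).trans (by rw [show q ≫ r = 0 from eq]; exact Limits.comp_zero)
  | id X => intro Y g hg; exact ⟨Y, 𝟙 Y, MClos.id Y, by simpa using hg⟩
  | comp s t hs ht ihs iht =>
      intro Y g hg
      obtain ⟨Y₁, t₁, ht₁, e₁⟩ := ihs (t ≫ g) (by rw [← Category.assoc]; exact hg)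
      obtain ⟨Y₂, t₂, ht₂, e₂⟩ := iht (g ≫ t₁) (by rw [← Category.assoc]; exact e₁)
      exact ⟨Y₂, t₁ ≫ t₂, MClos.comp _ _ ht₁ ht₂, by rw [← Category.assoc]; exact e₂⟩

lemma hasLeftCalc (hC : IsThickSub C Cs) :
    (mclosP (coneIn Cs)).HasLeftCalculusOfFractions where
  id_mem := MClos.id
  comp_mem := fun f g hf hg => MClos.comp f g hf hg
  exists_leftFraction X Y φ := by
    obtain ⟨Y', f', s', hs', eq⟩ := mclos_ore φ.s φ.hs φ.f
    exact ⟨⟨f', s', hs'⟩, eq⟩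
  ext X' X Y f₁ f₂ s hs h := by
    obtain ⟨Y', t, ht, h0⟩ := mclos_ext hC s hs (f₁ - f₂)
      (by rw [Preadditive.comp_sub, h, sub_self])
    exact ⟨Y', t, ht, by rwa [← sub_eq_zero, ← Preadditive.sub_comp]⟩

end ConeIn

section Loc

variable (Cs : Set C)

lemma isInvertedBy_mclos (Q : C ⥤ E) [Q.IsLocalization (coneIn Cs)] :
    (mclosP (coneIn Cs)).IsInvertedBy Q := by
  intro X Y f hf
  induction hf with
  | of f hf => exact Localization.inverts Q (coneIn Cs) f hf
  | id X => rw [Q.map_id]; infer_instance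
  | comp f g hf hg ihf ihg =>
      rw [Q.map_comp]
      exact @IsIso.comp_isIso _ _ _ _ _ _ _ ihf ihg

lemma isLocalization_mclos (Q : C ⥤ E) [Q.IsLocalization (coneIn Cs)] :
    Q.IsLocalization (mclosP (coneIn Cs)) :=
  Functor.IsLocalization.of_equivalence_source Q (coneIn Cs) Q (mclosP (coneIn Cs))
    (CategoryTheory.Equivalence.refl) (fun _ _ f hf => MorphismProperty.le_isoClosure _ _ (MClos.of f hf))
    (isInvertedBy_mclos Cs Q) (Functor.leftUnitor Q)

variable {Cs} (hC : IsThickSub C Cs)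
include hC

lemma biprod_mem {X Y : C} (hX : X ∈ Cs) (hY : Y ∈ Cs) : (X ⊞ Y) ∈ Cs :=
  hC.ext_mem _ (binaryBiproductTriangle_distinguished X Y) hX hY

/-- If an `MClos` morphism factors through an object of `Cs`, then
some identity-completing factorization exists. -/
lemma factor_through :
    ∀ ⦃N Y : C⦄ (g : N ⟶ Y), MClos (coneIn Cs) g →
    ∀ ⦃X R : C⦄ (f : X ⟶ N) (w : X ⟶ R) (d : R ⟶ Y), R ∈ Cs → f ≫ g = w ≫ d →
    ∃ (R' : C) (a : X ⟶ R') (b : R' ⟶ N), R' ∈ Cs ∧ f = a ≫ b := by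
  intro N Y g hg
  induction hg with
  | of g hg =>
      rename_i N' Y'
      intro X R f w d hR hfac
      obtain ⟨Z, p, q, H, hZ⟩ := hg
      obtain ⟨F, φ, ψ, HF⟩ := distinguished_cocone_triangle₁ (d ≫ p)
      have hF : F ∈ Cs :=
        hC.ext_mem _ (inv_rot_of_distTriang _ HF) (hC.shift_mem (-1) Z hZ) hR
      obtain ⟨ξ₀, hξ₀, -⟩ := complete_distinguished_triangle_morphism₁ _ _ HF H d (𝟙 Z)
        (by exact Category.comp_id _)
      obtain ⟨ξ, hξ⟩ : ∃ ξ : F ⟶ N', φ ≫ d = ξ ≫ g := ⟨ξ₀, hξ₀⟩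
      have hgp : g ≫ p = 0 := comp_distTriang_mor_zero₁₂ _ H
      have hw : w ≫ (d ≫ p) = 0 := by
        rw [← Category.assoc, ← hfac, Category.assoc, hgp, Limits.comp_zero]
      obtain ⟨ρ₀, hρ₀⟩ := Triangle.coyoneda_exact₂ _ HF w hw
      obtain ⟨ρ, hρ⟩ : ∃ ρ : X ⟶ F, w = ρ ≫ φ := ⟨ρ₀, hρ₀⟩
      have h2 : (f - ρ ≫ ξ) ≫ g = 0 := by
        rw [Preadditive.sub_comp, Category.assoc, ← hξ, ← Category.assoc, ← hρ, hfac,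
          sub_self]
      obtain ⟨ε₀, hε₀⟩ := Triangle.coyoneda_exact₂ _ (inv_rot_of_distTriang _ H)
        (f - ρ ≫ ξ) h2
      obtain ⟨ε, hε⟩ : ∃ ε : X ⟶ (Z⟦(-1 : ℤ)⟧),
          f - ρ ≫ ξ = ε ≫ (Triangle.mk g p q).invRotate.mor₁ := ⟨ε₀, hε₀⟩
      refine ⟨F ⊞ (Z⟦(-1 : ℤ)⟧), Limits.biprod.lift ρ ε,
        Limits.biprod.desc ξ ((Triangle.mk g p q).invRotate.mor₁), ?_, ?_⟩
      · exact biprod_mem hC hF (hC.shift_mem _ _ hZ)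
      · erw [Limits.biprod.lift_desc, ← hε]
        abel
  | id X =>
      intro X' R f w d hR hfac
      exact ⟨R, w, d, hR, by simpa using hfac⟩
  | comp g₁ g₂ h₁ h₂ ih₁ ih₂ =>
      intro X R f w d hR hfac
      obtain ⟨R₁, a₁, b₁, hR₁, hfac₁⟩ := ih₂ (f ≫ g₁) w d hR
        (by rw [Category.assoc]; exact hfac)
      exact ih₁ f a₁ b₁ hR₁ hfac₁

lemma mem_of_mclos_factor ⦃X Y : C⦄ (t : X ⟶ Y) (ht : MClos (coneIn Cs) t)
    ⦃R : C⦄ (w : X ⟶ R) (d : R ⟶ Y) (hR : R ∈ Cs) (hfac : t = w ≫ d) : X ∈ Cs := by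
  obtain ⟨R', a, b, hR', hab⟩ := factor_through hC t ht (𝟙 X) w d hR
    (by rw [Category.id_comp]; exact hfac)
  exact hC.summand_mem X R' a b hab.symm hR'

lemma src_mem_of_chainW_zero :
    ∀ {n : ℕ} ⦃P Y : C⦄ (f : P ⟶ Y), ChainW (coneIn Cs) n f → f = 0 → P ∈ Cs := by
  intro n P Y f hf
  induction hf with
  | nil X =>
      intro h0
      exact hC.zero_mem X (by rw [Limits.IsZero.iff_id_eq_zero]; exact h0)
  | cons f' s hf' hs' ih =>
      clear ih
      intro h0
      have hs := hs'
      obtain ⟨Zc, p, q, H, hZc⟩ := hs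
      have hmem2 : f' ≫ (Triangle.mk s p q).invRotate.mor₂ = 0 := by
        dsimp [Triangle.invRotate]
        exact h0
      obtain ⟨ε, hε⟩ := Triangle.coyoneda_exact₂ _ (inv_rot_of_distTriang _ H) f' hmem2
      exact mem_of_mclos_factor hC f' hf'.mclos ε _ (hC.shift_mem _ _ hZc) hε

lemma src_mem_of_mclos_zero ⦃P Y : C⦄ (h : MClos (coneIn Cs) (0 : P ⟶ Y)) : P ∈ Cs := by
  obtain ⟨n, hn⟩ := h.exists_chainW
  exact src_mem_of_chainW_zero hC _ hn rfl

end Loc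

section Quot

open ZeroObject

variable {Cs : Set C} (hC : IsThickSub C Cs) (Q : C ⥤ E) [Q.CommShift ℤ]
  [Q.IsTriangulated] [Q.IsLocalization (coneIn Cs)]

lemma isZero_Q_obj_zero : IsZero (Q.obj (0 : C)) := by
  have h := Q.map_distinguished _ (contractible_distinguished (0 : C))
  have : IsIso ((Q.mapTriangle.obj (contractibleTriangle (0 : C))).mor₁) := by
    dsimp [contractibleTriangle]
    exact (inferInstance : IsIso (Q.map (𝟙 (0 : C))))
  exact Triangle.isZero₃_of_isIso₁ _ h this

include hC in
lemma isZero_Q_obj {X : C} (hX : X ∈ Cs) : IsZero (Q.obj X) := by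
  have : IsIso (Q.map (0 : (0 : C) ⟶ X)) :=
    Localization.inverts Q (coneIn Cs) _ ⟨X, 𝟙 X, 0, contractible_distinguished₁ X, hX⟩
  exact (isZero_Q_obj_zero Q).of_iso (asIso (Q.map (0 : (0 : C) ⟶ X))).symm

include hC in
lemma mem_of_isZero {P : C} (hP : IsZero (Q.obj P)) : P ∈ Cs := by
  haveI := hasLeftCalc hC
  haveI := isLocalization_mclos Cs Q
  have h1 : Q.map (𝟙 P) = Q.map (0 : P ⟶ P) := by
    have hz : Q.map (0 : P ⟶ P) = 0 := by
      have h00 : (0 : P ⟶ P) = (0 : P ⟶ (0 : C)) ≫ (0 : (0 : C) ⟶ P) := by simp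
      rw [h00, Q.map_comp,
        (isZero_Q_obj_zero Q).eq_zero_of_tgt (Q.map (0 : P ⟶ (0 : C))), Limits.zero_comp]
    rw [hz, Q.map_id]
    exact hP.eq_zero_of_src _
  obtain ⟨Z, s, hs, heq⟩ :=
    (MorphismProperty.map_eq_iff_postcomp Q (mclosP (coneIn Cs)) (𝟙 P) 0).1 h1
  have hs0 : s = 0 := by simpa using heq
  rw [hs0] at hs
  exact src_mem_of_mclos_zero hC hs

include hC in
lemma exists_cone_of_isIso ⦃B Y : C⦄ (s : B ⟶ Y) (hs : IsIso (Q.map s)) :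
    ∃ (Z : C) (g : Y ⟶ Z) (hh : Z ⟶ B⟦(1 : ℤ)⟧),
      (Triangle.mk s g hh ∈ distTriang C) ∧ Z ∈ Cs := by
  obtain ⟨Z, g, hh, H⟩ := distinguished_cocone_triangle s
  have hz : IsZero (Q.obj Z) := by
    have h3 := Triangle.isZero₃_of_isIso₁ _ (Q.map_distinguished _ H) (by exact hs)
    exact h3
  exact ⟨Z, g, hh, H, mem_of_isZero hC Q hz⟩

include hC in
lemma hom_zero_Q {U V : Set C} (h : IsStableTStructure C U V)
    (hrel : IsStableTStructureRel C Cs (U ∩ Cs) (V ∩ Cs))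
    {A B : C} (hA : A ∈ U) (hB : B ∈ V) (φ : Q.obj A ⟶ Q.obj B) : φ = 0 := by
  haveI := hasLeftCalc hC
  haveI := isLocalization_mclos Cs Q
  obtain ⟨ψ, hψ⟩ := Localization.exists_leftFraction Q (mclosP (coneIn Cs)) φ
  have hsiso : IsIso (Q.map ψ.s) := Localization.inverts Q (mclosP (coneIn Cs)) _ ψ.hs
  obtain ⟨Z, g, hh, H, hZ⟩ := exists_cone_of_isIso hC Q ψ.s hsiso
  obtain ⟨A₁, B₁, hA₁, hB₁, α, β, γ, Htr⟩ := hrel.exists_triangle Z hZ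
  have hαh : α ≫ hh = 0 := h.hom_zero hA₁.1 (h.shift_memV 1 B hB) _
  obtain ⟨γ'₀, hγ'₀⟩ := Triangle.coyoneda_exact₃ _ H α hαh
  obtain ⟨γ', hγ'⟩ : ∃ γ' : A₁ ⟶ ψ.Y', α = γ' ≫ g := ⟨γ'₀, hγ'₀⟩
  have h3 : (ψ.f ≫ g) ≫ β = 0 := h.hom_zero hA hB₁.1 _
  obtain ⟨u₀, hu₀⟩ := Triangle.coyoneda_exact₂ _ Htr (ψ.f ≫ g) h3
  obtain ⟨u, hu⟩ : ∃ u : A ⟶ A₁, ψ.f ≫ g = u ≫ α := ⟨u₀, hu₀⟩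
  have h4 : (ψ.f - u ≫ γ') ≫ g = 0 := by
    rw [Preadditive.sub_comp, Category.assoc, ← hγ', ← hu, sub_self]
  obtain ⟨δ₀, hδ₀⟩ := Triangle.coyoneda_exact₂ _ H (ψ.f - u ≫ γ') h4
  obtain ⟨δ, hδ⟩ : ∃ δ : A ⟶ B, ψ.f - u ≫ γ' = δ ≫ ψ.s := ⟨δ₀, hδ₀⟩
  rw [h.hom_zero hA hB δ, Limits.zero_comp] at hδ
  have hf : ψ.f = u ≫ γ' := sub_eq_zero.mp hδ
  have hQf : Q.map ψ.f = 0 := by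
    rw [hf, Q.map_comp, (isZero_Q_obj hC Q hA₁.2).eq_zero_of_tgt (Q.map u),
      Limits.zero_comp]
  rw [hψ, ← cancel_mono (Q.map ψ.s), Limits.zero_comp,
    MorphismProperty.LeftFraction.map_comp_map_s, hQf]

end Quot

/-- let `Cs` be a thick subcategory of `D` and `Q : D → D/Cs` the Verdier
quotient (a triangulated localization at the morphisms with cone in `Cs`). For a stable
t-structure `(U, V)` in `D`, `(Q(U), Q(V))` is a stable t-structure in `D/Cs` iff
`(U ∩ Cs, V ∩ Cs)` is a stable t-structure in `Cs`. -/
theorem stmt9 (Cs : Set C) (hC : IsThickSub C Cs)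
    (Q : C ⥤ E) [Q.CommShift ℤ] [Q.IsTriangulated] [Q.IsLocalization (coneIn Cs)]
    (U V : Set C) (h : IsStableTStructure C U V) :
    IsStableTStructure E (qImage Q U) (qImage Q V) ↔
      IsStableTStructureRel C Cs (U ∩ Cs) (V ∩ Cs) := by
  constructor
  · intro hE
    refine ⟨Set.inter_subset_right, Set.inter_subset_right,
      fun n X hX => ⟨h.shift_memU n X hX.1, hC.shift_mem n X hX.2⟩,
      fun n X hX => ⟨h.shift_memV n X hX.1, hC.shift_mem n X hX.2⟩,
      fun X Y hX hY f => h.hom_zero hX.1 hY.1 f,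
      fun X hX => ?_⟩
    obtain ⟨A, B, hA, hB, f, g, h', HT⟩ := h.exists_triangle X
    have hQX : IsZero (Q.obj X) := isZero_Q_obj hC Q hX
    have hTE := Q.map_distinguished _ HT
    set TE := Q.mapTriangle.obj (Triangle.mk f g h') with hTEdef
    have memQA : Q.obj A ∈ qImage Q U := ⟨A, hA, ⟨Iso.refl _⟩⟩
    have memQB : Q.obj B ∈ qImage Q V := ⟨B, hB, ⟨Iso.refl _⟩⟩
    have hQA : IsZero (Q.obj A) := by
      have hm1 : TE.mor₁ = 0 := hQX.eq_zero_of_tgt _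
      obtain ⟨u₀, hu₀⟩ := Triangle.coyoneda_exact₂ _ (inv_rot_of_distTriang _ hTE)
        (𝟙 (Q.obj A)) (by
          show 𝟙 (Q.obj A) ≫ TE.mor₁ = 0
          exact (Category.id_comp _).trans hm1)
      obtain ⟨u, hu⟩ : ∃ u : Q.obj A ⟶ (Q.obj B)⟦(-1 : ℤ)⟧,
          𝟙 (Q.obj A) = u ≫ (TE.invRotate).mor₁ := ⟨u₀, hu₀⟩
      have hu0 : u = 0 := hE.hom_zero memQA
        ⟨B⟦(-1 : ℤ)⟧, h.shift_memV (-1) B hB, ⟨((Q.commShiftIso (-1 : ℤ)).app B).symm⟩⟩ u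
      rw [Limits.IsZero.iff_id_eq_zero, hu, hu0]; exact Limits.zero_comp
    have hQB : IsZero (Q.obj B) := by
      have hm2 : TE.mor₂ = 0 := hQX.eq_zero_of_src _
      obtain ⟨v₀, hv₀⟩ := Triangle.yoneda_exact₂ _ (rot_of_distTriang _ hTE)
        (𝟙 (Q.obj B)) (by
          show TE.mor₂ ≫ 𝟙 (Q.obj B) = 0
          rw [hm2]; exact Limits.zero_comp)
      obtain ⟨v, hv⟩ : ∃ v : (Q.obj A)⟦(1 : ℤ)⟧ ⟶ Q.obj B,
          𝟙 (Q.obj B) = (TE.rotate).mor₂ ≫ v := ⟨v₀, hv₀⟩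
      have hv0 : v = 0 := hE.hom_zero
        ⟨A⟦(1 : ℤ)⟧, h.shift_memU 1 A hA, ⟨((Q.commShiftIso (1 : ℤ)).app A).symm⟩⟩ memQB v
      rw [Limits.IsZero.iff_id_eq_zero, hv, hv0]; exact Limits.comp_zero
    exact ⟨A, B, ⟨hA, mem_of_isZero hC Q hQA⟩, ⟨hB, mem_of_isZero hC Q hQB⟩, f, g, h', HT⟩
  · intro hrel
    haveI : Q.EssSurj := Localization.essSurj Q (coneIn Cs)
    refine ⟨?_, ?_, ?_, ?_⟩
    · rintro n Xe ⟨X, hX, ⟨e⟩⟩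
      exact ⟨X⟦n⟧, h.shift_memU n X hX,
        ⟨(shiftFunctor E n).mapIso e ≪≫ ((Q.commShiftIso n).app X).symm⟩⟩
    · rintro n Xe ⟨X, hX, ⟨e⟩⟩
      exact ⟨X⟦n⟧, h.shift_memV n X hX,
        ⟨(shiftFunctor E n).mapIso e ≪≫ ((Q.commShiftIso n).app X).symm⟩⟩
    · rintro Xe Ye ⟨A, hA, ⟨e₁⟩⟩ ⟨B, hB, ⟨e₂⟩⟩ f
      have hφ : e₁.inv ≫ f ≫ e₂.hom = 0 := hom_zero_Q hC Q h hrel hA hB _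
      calc f = e₁.hom ≫ (e₁.inv ≫ f ≫ e₂.hom) ≫ e₂.inv := by simp
        _ = 0 := by rw [hφ]; simp
    · intro Xe
      obtain ⟨A, B, hA, hB, f, g, h', HT⟩ := h.exists_triangle (Q.objPreimage Xe)
      have e : Q.obj (Q.objPreimage Xe) ≅ Xe := Q.objObjPreimageIso Xe
      refine ⟨Q.obj A, Q.obj B, ⟨A, hA, ⟨Iso.refl _⟩⟩, ⟨B, hB, ⟨Iso.refl _⟩⟩,
        Q.map f ≫ e.hom, e.inv ≫ Q.map g,
        Q.map h' ≫ (Q.commShiftIso (1 : ℤ)).hom.app A, ?_⟩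
      refine isomorphic_distinguished _ (Q.map_distinguished _ HT) _ ?_
      exact Triangle.isoMk _ _ (Iso.refl _) e.symm (Iso.refl _)
          (by exact (by simp : (Q.map f ≫ e.hom) ≫ e.inv = 𝟙 (Q.obj A) ≫ Q.map f))
          (by exact (by simp : (e.inv ≫ Q.map g) ≫ 𝟙 (Q.obj B) = e.inv ≫ Q.map g))
          (by exact (by simp : (Q.map h' ≫ (Q.commShiftIso (1 : ℤ)).hom.app A) ≫
            (shiftFunctor E (1 : ℤ)).map (𝟙 (Q.obj A)) =
            𝟙 (Q.obj B) ≫ (Q.map h' ≫ (Q.commShiftIso (1 : ℤ)).hom.app A)))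

end PaperIKM
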